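/- Let K = {a,b}, and for n ≥ 1 let S^r be the reduced shuffle channel from K^n to histograms, S^r(x, (i, n−i)) = 1 if x has exactly i entries equal to a, else 0. Under the uniform prior on K^n, the posterior single-target vulnerability of S^r equals that of the full shuffle channel S (uniform random permutation), and both equal (1/2^n) Σ_{i=0}^{n} C(n,i)·max(i, n−i)/n. -/

import Mathlib

/-- Number of entries of a binary dataset equal to `true` (the value a). -/
def cntA (n : ℕ) (x : Fin n → Bool) : ℕ :=
  (Finset.univ.filter fun i => x i = true).card

/-- The full binary shuffle channel: S(x,y) = 1/#h(x) if y has the same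
histogram as x, else 0. -/
noncomputable def SfullBin (n : ℕ) (x y : Fin n → Bool) : ℝ :=
  if cntA n y = cntA n x then
    1 / ((Finset.univ.filter fun z : Fin n → Bool => cntA n z = cntA n x).card : ℝ)
  else 0

/-- The reduced binary shuffle channel from datasets to histograms (indexed by
the number i of a's): S^r(x,i) = 1 if x has exactly i a's, else 0. -/
noncomputable def SrBin (n : ℕ) (x : Fin n → Bool) (i : ℕ) : ℝ :=
  if cntA n x = i then 1 else 0

open Finset

lemma cntA_eq_sum (n : ℕ) (x : Fin n → Bool) :
    cntA n x = ∑ i, if x i = true then 1 else 0 := by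
  rw [cntA, card_filter]

lemma cntA_le (n : ℕ) (x : Fin n → Bool) : cntA n x ≤ n := by
  simpa [cntA] using (card_filter_le univ fun i => x i = true)

lemma cntA_cons (m : ℕ) (b : Bool) (v : Fin m → Bool) :
    cntA (m+1) (Fin.cons b v) = b.toNat + cntA m v := by
  rw [cntA_eq_sum, cntA_eq_sum, Fin.sum_univ_succ]
  cases b <;> simp

lemma countAll (m j : ℕ) :
    (univ.filter fun x : Fin m → Bool => cntA m x = j).card = m.choose j := by
  have h : (univ.filter fun x : Fin m → Bool => cntA m x = j).card
      = (Finset.powersetCard j (univ : Finset (Fin m))).card := by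
    apply card_bij (fun x _ => univ.filter fun i => x i = true)
    · intro x hx
      rw [mem_powersetCard]
      exact ⟨subset_univ _, (mem_filter.1 hx).2⟩
    · intro x hx y hy h
      funext i
      have := Finset.ext_iff.1 h i
      simp only [mem_filter, mem_univ, true_and] at this
      cases hxi : x i <;> cases hyi : y i <;> simp [hxi, hyi] at this ⊢
    · intro s hs
      rw [mem_powersetCard] at hs
      refine ⟨fun i => decide (i ∈ s), ?_, ?_⟩
      · rw [mem_filter]; simp only [mem_univ, true_and, cntA]
        have : (univ.filter fun i => decide (i ∈ s) = true) = s := by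
          ext i; simp
        rw [this]; exact hs.2
      · ext i; simp
  rw [h, card_powersetCard, card_univ, Fintype.card_fin]

lemma cardFixed (m : ℕ) (w : Bool) (i : ℕ) :
    (univ.filter fun x : Fin (m+1) → Bool => x 0 = w ∧ cntA (m+1) x = i).card
      = (univ.filter fun v : Fin m → Bool => w.toNat + cntA m v = i).card := by
  apply card_bij' (fun x _ => Fin.tail x) (fun v _ => Fin.cons w v)
  case hi =>
    intro x hx
    simp only [mem_filter, mem_univ, true_and] at hx ⊢
    rw [← hx.2, ← cntA_cons m w (Fin.tail x), ← hx.1, Fin.cons_self_tail]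
  case hj =>
    intro v hv
    simp only [mem_filter, mem_univ, true_and] at hv ⊢
    exact ⟨Fin.cons_zero _ _, by rw [cntA_cons]; exact hv⟩
  case left_inv =>
    intro x hx
    simp only [mem_filter, mem_univ, true_and] at hx
    rw [← hx.1, Fin.cons_self_tail]
  case right_inv =>
    intro v _
    exact Fin.tail_cons _ _

lemma boolSup (f : Bool → ℝ) :
    (univ : Finset Bool).sup' univ_nonempty f = max (f false) (f true) := by
  refine le_antisymm (Finset.sup'_le _ _ fun b _ => ?_)
    (max_le (Finset.le_sup' f (mem_univ _)) (Finset.le_sup' f (mem_univ _)))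
  cases b
  · exact le_max_left _ _
  · exact le_max_right _ _

lemma cardFalse (m i : ℕ) :
    (univ.filter fun x : Fin (m+1) → Bool => x 0 = false ∧ cntA (m+1) x = i).card
      = m.choose i := by
  rw [cardFixed]
  have : (univ.filter fun v : Fin m → Bool => Bool.toNat false + cntA m v = i)
      = univ.filter fun v : Fin m → Bool => cntA m v = i := by
    apply Finset.filter_congr
    intro v _
    simp
  rw [this, countAll]

lemma cardTrue (m i : ℕ) :
    (univ.filter fun x : Fin (m+1) → Bool => x 0 = true ∧ cntA (m+1) x = i).card
      = if i = 0 then 0 else m.choose (i-1) := by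
  rw [cardFixed]
  cases i with
  | zero =>
    rw [if_pos rfl, Finset.card_eq_zero, Finset.filter_eq_empty_iff]
    intro v _
    simp
  | succ k =>
    rw [if_neg (Nat.succ_ne_zero k)]
    have : (univ.filter fun v : Fin m → Bool => Bool.toNat true + cntA m v = k + 1)
        = univ.filter fun v : Fin m → Bool => cntA m v = k := by
      apply Finset.filter_congr
      intro v _
      simp only [Bool.toNat_true, eq_iff_iff]
      omega
    rw [this, countAll]
    simp

lemma natKey (m i : ℕ) :
    (m+1) * max (m.choose i) (if i = 0 then 0 else m.choose (i-1))
      = (m+1).choose i * max i (m+1-i) := by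
  cases i with
  | zero => simp
  | succ k =>
    rw [if_neg (Nat.succ_ne_zero k)]
    simp only [Nat.add_sub_cancel]
    have h1 : (m+1) * m.choose k = (m+1).choose (k+1) * (k+1) :=
      Nat.add_one_mul_choose_eq m k
    have h2 : (m+1) * m.choose (k+1) = (m+1).choose (k+1) * (m - k) := by
      rw [mul_comm, Nat.choose_mul_succ_eq m (k+1)]
      congr 1
      omega
    have hmax : (m+1) * max (m.choose (k+1)) (m.choose k)
        = max ((m+1) * m.choose (k+1)) ((m+1) * m.choose k) :=
      mul_max_of_nonneg _ _ (Nat.zero_le _)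
    rw [hmax, h1, h2, ← mul_max_of_nonneg _ _ (Nat.zero_le ((m+1).choose (k+1)))]
    congr 1
    omega

lemma sfull_eq (n : ℕ) (x y : Fin n → Bool) :
    SfullBin n x y
      = (1 / ((univ.filter fun z : Fin n → Bool => cntA n z = cntA n y).card : ℝ))
        * (if cntA n x = cntA n y then 1 else 0) := by
  unfold SfullBin
  by_cases h : cntA n y = cntA n x
  · rw [if_pos h, if_pos h.symm, mul_one, h]
  · rw [if_neg h, if_neg (fun h' => h h'.symm), mul_zero]

/-- under the uniform prior, the posterior single-target
vulnerability of the reduced shuffle channel S^r equals that of the full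
shuffle channel S, and both equal (1/2^n) Σ_i C(n,i)·max(i, n−i)/n. -/
theorem stmt18 (n : ℕ) (hn : 1 ≤ n) :
    (∑ i ∈ Finset.range (n + 1),
        Finset.univ.sup' Finset.univ_nonempty (fun w : Bool =>
          ∑ x ∈ Finset.univ.filter (fun x : Fin n → Bool => x ⟨0, by omega⟩ = w),
            (1 / (2 : ℝ) ^ n) * SrBin n x i))
      = (∑ y : Fin n → Bool,
          Finset.univ.sup' Finset.univ_nonempty (fun w : Bool =>
            ∑ x ∈ Finset.univ.filter (fun x : Fin n → Bool => x ⟨0, by omega⟩ = w),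
              (1 / (2 : ℝ) ^ n) * SfullBin n x y)) ∧
    (∑ i ∈ Finset.range (n + 1),
        Finset.univ.sup' Finset.univ_nonempty (fun w : Bool =>
          ∑ x ∈ Finset.univ.filter (fun x : Fin n → Bool => x ⟨0, by omega⟩ = w),
            (1 / (2 : ℝ) ^ n) * SrBin n x i))
      = (1 / 2 ^ n) * ∑ i ∈ Finset.range (n + 1),
          (n.choose i : ℝ) * ((max i (n - i) : ℕ) : ℝ) / n := by
  obtain ⟨m, rfl⟩ : ∃ m, n = m + 1 := ⟨n - 1, by omega⟩
  simp only [Fin.mk_zero]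
  -- abbreviations
  set u : ℝ := 1 / (2 : ℝ) ^ (m+1) with hu
  have hu0 : 0 ≤ u := by positivity
  -- the natural-number "max count" per histogram
  set M : ℕ → ℕ := fun i => max (m.choose i) (if i = 0 then 0 else m.choose (i-1)) with hM
  -- inner sum for the reduced channel
  have hr : ∀ (i : ℕ) (w : Bool),
      (∑ x ∈ univ.filter (fun x : Fin (m+1) → Bool => x 0 = w), u * SrBin (m+1) x i)
        = u * ((univ.filter fun x : Fin (m+1) → Bool => x 0 = w ∧ cntA (m+1) x = i).card : ℝ) := by
    intro i w
    rw [← mul_sum]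
    congr 1
    unfold SrBin
    rw [sum_boole, filter_filter]
  -- the reduced side in closed form
  have hA : (∑ i ∈ Finset.range (m+1+1),
        Finset.univ.sup' Finset.univ_nonempty (fun w : Bool =>
          ∑ x ∈ Finset.univ.filter (fun x : Fin (m+1) → Bool => x 0 = w),
            u * SrBin (m+1) x i))
      = ∑ i ∈ Finset.range (m+1+1), u * ((M i : ℕ) : ℝ) := by
    refine Finset.sum_congr rfl fun i _ => ?_
    rw [boolSup]
    simp only [hr, cardFalse, cardTrue]
    rw [hM]
    push_cast [Nat.cast_max]
    rw [mul_max_of_nonneg _ _ hu0]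
  -- inner sum for the full channel
  have hf : ∀ (y : Fin (m+1) → Bool) (w : Bool),
      (∑ x ∈ univ.filter (fun x : Fin (m+1) → Bool => x 0 = w), u * SfullBin (m+1) x y)
        = (u * (1 / ((univ.filter fun z : Fin (m+1) → Bool => cntA (m+1) z = cntA (m+1) y).card : ℝ)))
          * ((univ.filter fun x : Fin (m+1) → Bool => x 0 = w ∧ cntA (m+1) x = cntA (m+1) y).card : ℝ) := by
    intro y w
    simp only [sfull_eq, ← mul_assoc]
    rw [← mul_sum]
    congr 1
    rw [sum_boole, filter_filter]
  -- the full side reduces to the same closed form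
  have hB : (∑ y : Fin (m+1) → Bool,
        Finset.univ.sup' Finset.univ_nonempty (fun w : Bool =>
          ∑ x ∈ Finset.univ.filter (fun x : Fin (m+1) → Bool => x 0 = w),
            u * SfullBin (m+1) x y))
      = ∑ i ∈ Finset.range (m+1+1), u * ((M i : ℕ) : ℝ) := by
    have hgrp := Finset.sum_fiberwise_of_maps_to
      (s := (Finset.univ : Finset (Fin (m+1) → Bool)))
      (g := fun y : Fin (m+1) → Bool => cntA (m+1) y) (t := Finset.range (m+1+1))
      (fun y _ => Finset.mem_range.2 (Nat.lt_succ_of_le (cntA_le _ y)))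
      (fun y => Finset.univ.sup' Finset.univ_nonempty (fun w : Bool =>
          ∑ x ∈ Finset.univ.filter (fun x : Fin (m+1) → Bool => x 0 = w),
            u * SfullBin (m+1) x y))
    rw [← hgrp]
    refine Finset.sum_congr rfl fun j hj => ?_
    have hjle : j ≤ m + 1 := Nat.lt_succ_iff.1 (Finset.mem_range.1 hj)
    have hNj : (univ.filter fun z : Fin (m+1) → Bool => cntA (m+1) z = j).card
        = (m+1).choose j := countAll (m+1) j
    have hNpos : 0 < (m+1).choose j := Nat.choose_pos hjle
    have hstep : ∀ y ∈ univ.filter (fun y : Fin (m+1) → Bool => cntA (m+1) y = j),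
        Finset.univ.sup' Finset.univ_nonempty (fun w : Bool =>
          ∑ x ∈ Finset.univ.filter (fun x : Fin (m+1) → Bool => x 0 = w),
            u * SfullBin (m+1) x y)
        = (u * (1 / ((m+1).choose j : ℝ))) * ((M j : ℕ) : ℝ) := by
      intro y hy
      have hyj : cntA (m+1) y = j := (mem_filter.1 hy).2
      rw [boolSup]
      simp only [hf, hyj, cardFalse, cardTrue, hNj]
      rw [hM]
      push_cast [Nat.cast_max]
      rw [mul_max_of_nonneg]
      positivity
    rw [Finset.sum_congr rfl hstep, Finset.sum_const]
    have hcard : (univ.filter fun y : Fin (m+1) → Bool => cntA (m+1) y = j).card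
        = (m+1).choose j := countAll (m+1) j
    rw [hcard, nsmul_eq_mul]
    have hne : ((m+1).choose j : ℝ) ≠ 0 := Nat.cast_ne_zero.2 hNpos.ne'
    field_simp
  constructor
  · exact hA.trans hB.symm
  · refine hA.trans ?_; rw [Finset.mul_sum]
    refine Finset.sum_congr rfl fun i hi => ?_
    have hkey := natKey m i
    have hne : ((m+1 : ℕ) : ℝ) ≠ 0 := by positivity
    have hcast : ((m+1 : ℕ) : ℝ) * ((M i : ℕ) : ℝ)
        = ((m+1).choose i : ℝ) * ((max i (m+1-i) : ℕ) : ℝ) := by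
      rw [hM]
      exact_mod_cast congrArg (Nat.cast : ℕ → ℝ) hkey
    have hMi : ((M i : ℕ) : ℝ) = ((m+1).choose i : ℝ) * ((max i (m+1-i) : ℕ) : ℝ) / ((m+1:ℕ) : ℝ) := by
      rw [eq_div_iff hne, mul_comm]
      exact hcast
    rw [hMi]
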